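/- Let A be the algebra of S⁵_q with generators x₁, x₂, x₃ satisfying xᵢxⱼ = q xⱼxᵢ for i<j, xᵢ*xⱼ = q xⱼxᵢ* for i≠j, [x₁,x₁*] = 0, [x₂,x₂*] = (1-q⁻²)x₁x₁*, [x₃,x₃*] = (1-q⁻²)(x₂*x₂ + x₁*x₁), and x₃*x₃ + x₂*x₂ + x₁*x₁ = 1. Then the 8×8 matrix e₍₅₎ = (1/2)[[I₄ + q⁻¹u₍₃₎, x₃ I₄],[x₃* I₄, I₄ - u₍₃₎]], where u₍₃₎ = 2e₍₃₎ - 1 and e₍₃₎ is the S³_q projection built from x₁, x₂, satisfies e₍₅₎² = e₍₅₎ and e₍₅₎* = e₍₅₎. -/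

import Mathlib

set_option maxHeartbeats 1600000 in
/-- The soliton projection on S⁵_q (radius normalized so that
x₃*x₃ + x₂*x₂ + x₁*x₁ = 1): the 8×8 block matrix
e₍₅₎ = (1/2)[[I₄ + q⁻¹u₍₃₎, x₃ I₄],[x₃* I₄, I₄ - u₍₃₎]], with u₍₃₎ = 2e₍₃₎ - 1
and e₍₃₎ the S³_q projection built from x₁, x₂, is a self-adjoint idempotent. -/
theorem stmt12 (A : Type*) [Ring A] [StarRing A] [Algebra ℂ A] [StarModule ℂ A]
    (q : ℝ) (hq : 0 < q) (x1 x2 x3 : A)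
    (h12 : x1 * x2 = (q : ℂ) • (x2 * x1))
    (h13 : x1 * x3 = (q : ℂ) • (x3 * x1))
    (h23 : x2 * x3 = (q : ℂ) • (x3 * x2))
    (h12s : star x1 * x2 = (q : ℂ) • (x2 * star x1))
    (h21s : star x2 * x1 = (q : ℂ) • (x1 * star x2))
    (h13s : star x1 * x3 = (q : ℂ) • (x3 * star x1))
    (h31s : star x3 * x1 = (q : ℂ) • (x1 * star x3))
    (h23s : star x2 * x3 = (q : ℂ) • (x3 * star x2))
    (h32s : star x3 * x2 = (q : ℂ) • (x2 * star x3))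
    (hc1 : x1 * star x1 = star x1 * x1)
    (hc2 : x2 * star x2 - star x2 * x2 = ((1 - q⁻¹ ^ 2 : ℝ) : ℂ) • (x1 * star x1))
    (hc3 : x3 * star x3 - star x3 * x3
      = ((1 - q⁻¹ ^ 2 : ℝ) : ℂ) • (star x2 * x2 + star x1 * x1))
    (hrad : star x3 * x3 + star x2 * x2 + star x1 * x1 = 1) :
    let e3 : Matrix (Fin 4) (Fin 4) A :=
      (1 / 2 : ℂ) •
        !![1, ((q⁻¹ : ℝ) : ℂ) • x1, x2, 0;
           ((q⁻¹ : ℝ) : ℂ) • star x1, 1, 0, x2;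
           star x2, 0, 1, -x1;
           0, star x2, -star x1, 1]
    let u3 : Matrix (Fin 4) (Fin 4) A := (2 : ℂ) • e3 - 1
    let e5 : Matrix (Fin 4 ⊕ Fin 4) (Fin 4 ⊕ Fin 4) A :=
      (1 / 2 : ℂ) •
        Matrix.fromBlocks
          (1 + ((q⁻¹ : ℝ) : ℂ) • u3)
          (Matrix.diagonal fun _ => x3)
          (Matrix.diagonal fun _ => star x3)
          (1 - u3)
    e5 * e5 = e5 ∧ star e5 = e5 := by
  intro e3 u3 e5
  have hq0 : q ≠ 0 := hq.ne'
  have hQ0 : (q : ℂ) ≠ 0 := Complex.ofReal_ne_zero.mpr hq0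
  have hcq : ((q⁻¹ : ℝ) : ℂ) * (q : ℂ) = 1 := by
    push_cast
    exact inv_mul_cancel₀ hQ0
  have hqc : (q : ℂ) * ((q⁻¹ : ℝ) : ℂ) = 1 := by rw [mul_comm]; exact hcq
  have hs12 : star x2 * star x1 = (q : ℂ) • (star x1 * star x2) := by
    have h := congrArg star h12
    simpa [star_smul, mul_comm] using h
  have hs13 : star x3 * star x1 = (q : ℂ) • (star x1 * star x3) := by
    have h := congrArg star h13
    simpa [star_smul, mul_comm] using h
  have hs23 : star x3 * star x2 = (q : ℂ) • (star x2 * star x3) := by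
    have h := congrArg star h23
    simpa [star_smul, mul_comm] using h
  have m2 : x2 * star x2
      = star x2 * x2 + ((1 : ℂ) - ((q⁻¹ : ℝ) : ℂ) ^ 2) • (x1 * star x1) := by
    have h := eq_add_of_sub_eq' hc2
    rw [h]; push_cast; module
  have hS : star x3 * x3 = 1 - (star x2 * x2 + star x1 * x1) := by
    rw [← hrad]; abel
  have m3 : x3 * star x3
      = 1 - ((q⁻¹ : ℝ) : ℂ) ^ 2 • (star x2 * x2 + star x1 * x1) := by
    have h := eq_add_of_sub_eq' hc3
    rw [h, hS]; push_cast; module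
  -- explicit form of u3
  have hu : u3 = !![0, ((q⁻¹ : ℝ) : ℂ) • x1, x2, 0;
           ((q⁻¹ : ℝ) : ℂ) • star x1, 0, 0, x2;
           star x2, 0, 0, -x1;
           0, star x2, -star x1, 0] := by
    have h : u3 = !![1, ((q⁻¹ : ℝ) : ℂ) • x1, x2, 0;
             ((q⁻¹ : ℝ) : ℂ) • star x1, 1, 0, x2;
             star x2, 0, 1, -x1;
             0, star x2, -star x1, 1] - 1 := by
      simp only [u3, e3, smul_smul]
      norm_num
    rw [h]
    ext i j
    fin_cases i <;> fin_cases j <;> simp [Matrix.sub_apply, Matrix.one_apply]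
  -- u3 is self-adjoint
  have huS : star u3 = u3 := by
    rw [hu]
    ext i j
    fin_cases i <;> fin_cases j <;>
      simp [Matrix.star_apply, star_smul, Complex.star_def, Complex.conj_ofReal]
  -- u3 * u3 = diagonal
  have M1 : u3 * u3
      = Matrix.diagonal (fun _ => star x2 * x2 + star x1 * x1) := by
    rw [hu]
    ext i j
    fin_cases i <;> fin_cases j <;>
      simp [Matrix.mul_apply, Fin.sum_univ_four, Matrix.diagonal, h12, h12s, h21s,
        hs12, hc1, m2, smul_smul, mul_smul_comm, smul_mul_assoc, mul_assoc, hcq, hqc] <;>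
      match_scalars <;> (try push_cast) <;> (try field_simp) <;> try ring
    all_goals simp [Algebra.cast]
  -- commutation of u3 with the diagonal x3 matrices
  have M2 : ((q⁻¹ : ℝ) : ℂ) • (u3 * Matrix.diagonal (fun _ : Fin 4 => x3))
      = Matrix.diagonal (fun _ : Fin 4 => x3) * u3 := by
    rw [hu]
    ext i j
    fin_cases i <;> fin_cases j <;>
      simp [Matrix.mul_diagonal, Matrix.diagonal_mul, h13, h23, h13s, h23s,
        smul_smul, mul_smul_comm, smul_mul_assoc, mul_assoc, hcq, hqc] <;>
      match_scalars <;> (try push_cast) <;> (try field_simp) <;> try ring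
    all_goals simp [Algebra.cast]
  have M3 : ((q⁻¹ : ℝ) : ℂ) • (Matrix.diagonal (fun _ : Fin 4 => star x3) * u3)
      = u3 * Matrix.diagonal (fun _ : Fin 4 => star x3) := by
    rw [hu]
    ext i j
    fin_cases i <;> fin_cases j <;>
      simp [Matrix.mul_diagonal, Matrix.diagonal_mul, h31s, h32s, hs13, hs23,
        smul_smul, mul_smul_comm, smul_mul_assoc, mul_assoc, hcq, hqc] <;>
      match_scalars <;> (try push_cast) <;> (try field_simp) <;> try ring
    all_goals simp [Algebra.cast]
  -- diagonal products
  have hXX' : Matrix.diagonal (fun _ : Fin 4 => x3)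
        * Matrix.diagonal (fun _ : Fin 4 => star x3)
      = 1 - ((q⁻¹ : ℝ) : ℂ) ^ 2
          • Matrix.diagonal (fun _ : Fin 4 => star x2 * x2 + star x1 * x1) := by
    rw [Matrix.diagonal_mul_diagonal]
    ext i j
    by_cases h : i = j <;>
      simp [h, Matrix.diagonal_apply_eq, Matrix.diagonal_apply_ne, m3,
        Matrix.one_apply]
  have hX'X : Matrix.diagonal (fun _ : Fin 4 => star x3)
        * Matrix.diagonal (fun _ : Fin 4 => x3)
      = 1 - Matrix.diagonal (fun _ : Fin 4 => star x2 * x2 + star x1 * x1) := by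
    rw [Matrix.diagonal_mul_diagonal]
    ext i j
    by_cases h : i = j <;>
      simp [h, Matrix.diagonal_apply_eq, Matrix.diagonal_apply_ne, hS,
        Matrix.one_apply]
  -- block identities
  have hB1 : (1 + ((q⁻¹ : ℝ) : ℂ) • u3) * (1 + ((q⁻¹ : ℝ) : ℂ) • u3)
        + Matrix.diagonal (fun _ : Fin 4 => x3)
          * Matrix.diagonal (fun _ : Fin 4 => star x3)
      = (2 : ℂ) • (1 + ((q⁻¹ : ℝ) : ℂ) • u3) := by
    simp only [mul_add, add_mul, one_mul, mul_one, smul_mul_assoc, mul_smul_comm,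
      M1, hXX', smul_smul]
    module
  have hB2 : (1 + ((q⁻¹ : ℝ) : ℂ) • u3) * Matrix.diagonal (fun _ : Fin 4 => x3)
        + Matrix.diagonal (fun _ : Fin 4 => x3) * (1 - u3)
      = (2 : ℂ) • Matrix.diagonal (fun _ : Fin 4 => x3) := by
    simp only [add_mul, mul_sub, one_mul, mul_one, smul_mul_assoc, M2]
    module
  have hB3 : Matrix.diagonal (fun _ : Fin 4 => star x3) * (1 + ((q⁻¹ : ℝ) : ℂ) • u3)
        + (1 - u3) * Matrix.diagonal (fun _ : Fin 4 => star x3)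
      = (2 : ℂ) • Matrix.diagonal (fun _ : Fin 4 => star x3) := by
    simp only [mul_add, sub_mul, one_mul, mul_one, mul_smul_comm, M3]
    module
  have hB4 : Matrix.diagonal (fun _ : Fin 4 => star x3)
          * Matrix.diagonal (fun _ : Fin 4 => x3)
        + (1 - u3) * (1 - u3)
      = (2 : ℂ) • (1 - u3) := by
    simp only [mul_sub, sub_mul, one_mul, mul_one, M1, hX'X]
    module
  constructor
  · -- idempotent
    have key : Matrix.fromBlocks
          (1 + ((q⁻¹ : ℝ) : ℂ) • u3)
          (Matrix.diagonal fun _ => x3)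
          (Matrix.diagonal fun _ => star x3)
          (1 - u3)
        * Matrix.fromBlocks
          (1 + ((q⁻¹ : ℝ) : ℂ) • u3)
          (Matrix.diagonal fun _ => x3)
          (Matrix.diagonal fun _ => star x3)
          (1 - u3)
        = (2 : ℂ) • Matrix.fromBlocks
          (1 + ((q⁻¹ : ℝ) : ℂ) • u3)
          (Matrix.diagonal fun _ => x3)
          (Matrix.diagonal fun _ => star x3)
          (1 - u3) := by
      rw [Matrix.fromBlocks_multiply, Matrix.fromBlocks_smul, hB1, hB2, hB3, hB4]
    show e5 * e5 = e5
    simp only [e5]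
    rw [smul_mul_assoc, mul_smul_comm, key, smul_smul, smul_smul]
    congr 1
    norm_num
  · -- self-adjoint
    have hP : Matrix.conjTranspose (1 + ((q⁻¹ : ℝ) : ℂ) • u3)
        = 1 + ((q⁻¹ : ℝ) : ℂ) • u3 := by
      rw [Matrix.conjTranspose_add, Matrix.conjTranspose_smul,
        Matrix.conjTranspose_one, show Matrix.conjTranspose u3 = u3 from huS,
        show star ((q⁻¹ : ℝ) : ℂ) = ((q⁻¹ : ℝ) : ℂ) by
          simp [Complex.star_def, Complex.conj_ofReal]]
    have hQc : Matrix.conjTranspose (Matrix.diagonal (fun _ : Fin 4 => x3))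
        = Matrix.diagonal (fun _ : Fin 4 => star x3) := by
      rw [Matrix.diagonal_conjTranspose]
      rfl
    have hRc : Matrix.conjTranspose (Matrix.diagonal (fun _ : Fin 4 => star x3))
        = Matrix.diagonal (fun _ : Fin 4 => x3) := by
      rw [Matrix.diagonal_conjTranspose]
      exact congrArg Matrix.diagonal (funext fun i => star_star x3)
    have hSc : Matrix.conjTranspose ((1 : Matrix (Fin 4) (Fin 4) A) - u3)
        = 1 - u3 := by
      rw [Matrix.conjTranspose_sub, Matrix.conjTranspose_one,
        show Matrix.conjTranspose u3 = u3 from huS]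
    show star e5 = e5
    simp only [e5]
    rw [star_smul]
    have hF : star (Matrix.fromBlocks
          (1 + ((q⁻¹ : ℝ) : ℂ) • u3)
          (Matrix.diagonal fun _ => x3)
          (Matrix.diagonal fun _ => star x3)
          (1 - u3))
        = Matrix.fromBlocks
          (1 + ((q⁻¹ : ℝ) : ℂ) • u3)
          (Matrix.diagonal fun _ => x3)
          (Matrix.diagonal fun _ => star x3)
          (1 - u3) := by
      show Matrix.conjTranspose _ = _
      rw [Matrix.fromBlocks_conjTranspose, hP, hQc, hRc, hSc]
    rw [hF]
    congr 1
    simp [Complex.star_def]
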